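/- Let A > 0 and let d, r be real numbers with 0 < d ≤ r satisfying r²·arcsin(d/r) − d·√(r² − d²) = A. Then equality 2r·arcsin(d/r) = √(2·A·π) holds if and only if r = d = √(2A/π). -/

import Mathlib

open Real

lemma key_half (x : ℝ) (hx0 : 0 < x) (hx : x ≤ π / 2) :
    x * (π - x) / π < Real.sin x := by
  have hpi3 : (3.141592 : ℝ) < π := Real.pi_gt_d6
  have hpi4 : π < 3.15 := by linarith [Real.pi_lt_d2]
  have hpipos : (0:ℝ) < π := by linarith
  rcases le_or_gt x 1 with h1 | h1
  · have hs := Real.sin_gt_sub_cube hx0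
    rw [div_lt_iff₀ hpipos]
    have h4 : 0 ≤ x * x * (4 - π * x) := by
      apply mul_nonneg (mul_nonneg hx0.le hx0.le); nlinarith
    nlinarith [mul_lt_mul_of_pos_right hs hpipos]
  · -- x ∈ (1, π/2]: use cos lower bound
    have ht : Real.sin x = Real.cos (π / 2 - x) := (Real.cos_pi_div_two_sub x).symm
    have hc := Real.one_sub_sq_div_two_le_cos (x := π / 2 - x)
    rw [ht, div_lt_iff₀ hpipos]
    nlinarith [sq_nonneg (π / 2 - x), sq_nonneg (π/2 - 1)]

lemma key (x : ℝ) (hx0 : 0 < x) (hxpi : x < π) :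
    x * (π - x) / π < Real.sin x := by
  rcases le_or_gt x (π / 2) with h | h
  · exact key_half x hx0 h
  · have h1 : 0 < π - x := by linarith
    have h2 : π - x ≤ π / 2 := by linarith
    have := key_half (π - x) h1 h2
    rw [Real.sin_pi_sub] at this
    calc x * (π - x) / π = (π - x) * (π - (π - x)) / π := by ring_nf
      _ < Real.sin x := this

theorem stmt_6 (A d r : ℝ) (hA : 0 < A) (hd : 0 < d) (hdr : d ≤ r)
    (harea : r ^ 2 * Real.arcsin (d / r) - d * Real.sqrt (r ^ 2 - d ^ 2) = A) :
    2 * r * Real.arcsin (d / r) = Real.sqrt (2 * A * Real.pi) ↔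
      r = Real.sqrt (2 * A / Real.pi) ∧ d = Real.sqrt (2 * A / Real.pi) := by
  have hr : 0 < r := lt_of_lt_of_le hd hdr
  have hpipos : (0:ℝ) < π := Real.pi_pos
  constructor
  · intro heq
    rcases eq_or_lt_of_le hdr with hde | hlt
    · -- d = r : diameter case
      subst hde
      rw [div_self hd.ne', Real.arcsin_one, sub_self, Real.sqrt_zero] at harea
      have hr2 : d ^ 2 = 2 * A / π := by
        field_simp at harea ⊢; linarith
      have hrv : d = Real.sqrt (2 * A / π) := by
        rw [← hr2, Real.sqrt_sq hd.le]
      exact ⟨hrv, hrv⟩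
    · -- d < r : derive a contradiction
      exfalso
      set θ := Real.arcsin (d / r) with hθ
      have hdr1 : d / r < 1 := (div_lt_one hr).mpr hlt
      have hdr0 : 0 < d / r := div_pos hd hr
      have hθ0 : 0 < θ := Real.arcsin_pos.mpr hdr0
      have hθpi : θ < π / 2 := Real.arcsin_lt_pi_div_two.mpr hdr1
      have hsin : Real.sin θ = d / r := Real.sin_arcsin (by linarith) hdr1.le
      have hcos : Real.cos θ = Real.sqrt (r ^ 2 - d ^ 2) / r := by
        rw [hθ, Real.cos_arcsin]
        rw [show 1 - (d / r) ^ 2 = (r ^ 2 - d ^ 2) / r ^ 2 by field_simp]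
        rw [Real.sqrt_div (by nlinarith : (0:ℝ) ≤ r ^ 2 - d ^ 2), Real.sqrt_sq hr.le]
      have hchord : d * Real.sqrt (r ^ 2 - d ^ 2) = r ^ 2 * (Real.sin θ * Real.cos θ) := by
        rw [hsin, hcos]; field_simp
      -- key inequality with x = 2θ
      have hkey := key (2 * θ) (by linarith) (by linarith)
      rw [Real.sin_two_mul, mul_assoc] at hkey
      have hAeq : 2 * A * π = π * r ^ 2 * (2 * θ - 2 * (Real.sin θ * Real.cos θ)) := by
        rw [← harea, hchord]; ring
      have hgt : (2 * r * θ) ^ 2 > 2 * A * π := by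
        rw [hAeq]
        have hr2 : 0 < r ^ 2 := by positivity
        rw [div_lt_iff₀ hpipos] at hkey
        nlinarith
      have hsq2 : (2 * r * θ) ^ 2 = 2 * A * π := by
        rw [heq, Real.sq_sqrt (by positivity)]
      linarith
  · rintro ⟨hrv, hdv⟩
    have hdr1 : d / r = 1 := by rw [hrv, hdv, div_self]; positivity
    rw [hdr1, Real.arcsin_one]
    have hr2 : r ^ 2 = 2 * A / π := by
      rw [hrv, Real.sq_sqrt (by positivity)]
    have h1 : (2 * r * (π / 2)) ^ 2 = 2 * A * π := by
      have : r ^ 2 * π ^ 2 = 2 * A * π := by rw [hr2]; field_simp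
      nlinarith [this]
    rw [show 2 * A * π = (2 * r * (π / 2)) ^ 2 from h1.symm,
      Real.sqrt_sq (by positivity)]
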